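/- arXiv:1706.08672 — 3 statements merged into one kernel-verified Lean document; each statement's English description precedes it below -/
import Mathlib

section
/- Let a₁,…,aₖ and b₁,…,bₖ be two families of orthonormal vectors in ℝ^d with ⟨aᵢ, bᵢ⟩² ≥ 1 - ε for each i. Then the spectral norm of Σᵢ (aᵢ⊗aᵢ)(aᵢ⊗aᵢ)ᵀ - (bᵢ⊗bᵢ)(bᵢ⊗bᵢ)ᵀ, as a d²×d² matrix, is at most 4√ε. -/
open Matrix
open scoped Kronecker

section Helpers
open Finset
variable {ι : Type*} [Fintype ι] {k : ℕ}

variable {ι : Type*} [Fintype ι] {k : ℕ}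

lemma dot_self_nonneg' (x : ι → ℝ) : 0 ≤ x ⬝ᵥ x :=
  Finset.sum_nonneg fun i _ => mul_self_nonneg _

lemma dot_sq_le' (u x : ι → ℝ) : (u ⬝ᵥ x) ^ 2 ≤ (u ⬝ᵥ u) * (x ⬝ᵥ x) := by
  simpa [dotProduct, sq] using Finset.sum_mul_sq_le_sq_mul_sq univ u x

lemma sum_dot_sum' (u v : Fin k → ι → ℝ) (y z : Fin k → ℝ) :
    (∑ i, y i • u i) ⬝ᵥ (∑ j, z j • v j) = ∑ i, ∑ j, y i * z j * (u i ⬝ᵥ v j) := by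
  simp only [dotProduct, Finset.sum_apply, Pi.smul_apply, smul_eq_mul,
    Finset.sum_mul_sum]
  rw [Finset.sum_comm]
  refine Finset.sum_congr rfl fun i _ => ?_
  rw [Finset.sum_comm]
  refine Finset.sum_congr rfl fun j _ => ?_
  rw [Finset.mul_sum]
  exact Finset.sum_congr rfl fun p _ => by ring

lemma synth_orth' (u : Fin k → ι → ℝ)
    (hu : ∀ i j, u i ⬝ᵥ u j = if i = j then (1:ℝ) else 0) (z : Fin k → ℝ) :
    (∑ i, z i • u i) ⬝ᵥ (∑ i, z i • u i) = ∑ i, z i ^ 2 := by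
  rw [sum_dot_sum']
  simp [hu, mul_ite, Finset.sum_ite_eq', sq]

lemma bessel' (u : Fin k → ι → ℝ)
    (hu : ∀ i j, u i ⬝ᵥ u j = if i = j then (1:ℝ) else 0) (x : ι → ℝ) :
    ∑ i, (u i ⬝ᵥ x) ^ 2 ≤ x ⬝ᵥ x := by
  have h0 : 0 ≤ (x - ∑ i, (u i ⬝ᵥ x) • u i) ⬝ᵥ (x - ∑ i, (u i ⬝ᵥ x) • u i) :=
    dot_self_nonneg' _
  have h1 : (∑ i, (u i ⬝ᵥ x) • u i) ⬝ᵥ (∑ i, (u i ⬝ᵥ x) • u i) = ∑ i, (u i ⬝ᵥ x) ^ 2 :=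
    synth_orth' u hu _
  have h2 : x ⬝ᵥ (∑ i, (u i ⬝ᵥ x) • u i) = ∑ i, (u i ⬝ᵥ x) ^ 2 := by
    simp only [dotProduct, Finset.sum_apply, Pi.smul_apply, smul_eq_mul,
      Finset.mul_sum]
    rw [Finset.sum_comm]
    refine Finset.sum_congr rfl fun i _ => ?_
    rw [sq, Finset.mul_sum]
    exact Finset.sum_congr rfl fun p _ => by ring
  have h3 : (∑ i, (u i ⬝ᵥ x) • u i) ⬝ᵥ x = ∑ i, (u i ⬝ᵥ x) ^ 2 := by
    rw [dotProduct_comm]; exact h2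
  rw [sub_dotProduct, dotProduct_sub, dotProduct_sub, h1, h2, h3] at h0
  linarith

lemma schur' (v : Fin k → ι → ℝ) {C : ℝ}
    (hrow : ∀ i, ∑ j, |v i ⬝ᵥ v j| ≤ C) (y : Fin k → ℝ) :
    (∑ i, y i • v i) ⬝ᵥ (∑ i, y i • v i) ≤ C * ∑ i, y i ^ 2 := by
  rw [sum_dot_sum']
  have step1 : ∀ i j : Fin k, y i * y j * (v i ⬝ᵥ v j) ≤
      (y i ^ 2 / 2) * |v i ⬝ᵥ v j| + (y j ^ 2 / 2) * |v i ⬝ᵥ v j| := by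
    intro i j
    have h1 : y i * y j * (v i ⬝ᵥ v j) ≤ |y i * y j| * |v i ⬝ᵥ v j| := by
      rw [← abs_mul]; exact le_abs_self _
    have h2 : |y i * y j| ≤ y i ^ 2 / 2 + y j ^ 2 / 2 := by
      rw [abs_mul]
      nlinarith [sq_nonneg (|y i| - |y j|), sq_abs (y i), sq_abs (y j), abs_nonneg (y i),
        abs_nonneg (y j)]
    nlinarith [abs_nonneg (v i ⬝ᵥ v j)]
  calc ∑ i, ∑ j, y i * y j * (v i ⬝ᵥ v j)
      ≤ ∑ i, ∑ j, ((y i ^ 2 / 2) * |v i ⬝ᵥ v j| + (y j ^ 2 / 2) * |v i ⬝ᵥ v j|) := by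
        refine Finset.sum_le_sum fun i _ => Finset.sum_le_sum fun j _ => step1 i j
    _ = ∑ i, ∑ j, (y i ^ 2 / 2) * |v i ⬝ᵥ v j| + ∑ i, ∑ j, (y j ^ 2 / 2) * |v i ⬝ᵥ v j| := by
        rw [← Finset.sum_add_distrib]
        exact Finset.sum_congr rfl fun i _ => Finset.sum_add_distrib
    _ = ∑ i, ∑ j, (y i ^ 2 / 2) * |v i ⬝ᵥ v j| + ∑ i, ∑ j, (y i ^ 2 / 2) * |v i ⬝ᵥ v j| := by
        congr 1
        rw [Finset.sum_comm]
        refine Finset.sum_congr rfl fun i _ => Finset.sum_congr rfl fun j _ => ?_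
        rw [dotProduct_comm]
    _ = ∑ i, y i ^ 2 * ∑ j, |v i ⬝ᵥ v j| := by
        rw [← two_mul]
        rw [Finset.mul_sum]
        refine Finset.sum_congr rfl fun i _ => ?_
        rw [Finset.mul_sum, Finset.mul_sum]
        exact Finset.sum_congr rfl fun j _ => by ring
    _ ≤ ∑ i, y i ^ 2 * C := by
        refine Finset.sum_le_sum fun i _ => ?_
        exact mul_le_mul_of_nonneg_left (hrow i) (sq_nonneg _)
    _ = C * ∑ i, y i ^ 2 := by rw [Finset.mul_sum]; exact Finset.sum_congr rfl fun i _ => mul_comm _ _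

lemma prod_dot' {d : ℕ} (f f' g g' : Fin d → ℝ) :
    (fun p : Fin d × Fin d => f p.1 * f' p.2) ⬝ᵥ (fun p : Fin d × Fin d => g p.1 * g' p.2)
      = (f ⬝ᵥ g) * (f' ⬝ᵥ g') := by
  simp only [dotProduct, Fintype.sum_prod_type, Finset.sum_mul_sum]
  exact Finset.sum_congr rfl fun p _ => Finset.sum_congr rfl fun q _ => by ring

lemma sqrt_dot_triangle' (f g : ι → ℝ) :
    Real.sqrt ((f + g) ⬝ᵥ (f + g)) ≤ Real.sqrt (f ⬝ᵥ f) + Real.sqrt (g ⬝ᵥ g) := by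
  have hfg : f ⬝ᵥ g ≤ Real.sqrt (f ⬝ᵥ f) * Real.sqrt (g ⬝ᵥ g) := by
    have h1 : (f ⬝ᵥ g) ^ 2 ≤ (f ⬝ᵥ f) * (g ⬝ᵥ g) := dot_sq_le' f g
    have h2 : f ⬝ᵥ g ≤ Real.sqrt ((f ⬝ᵥ f) * (g ⬝ᵥ g)) := by
      refine le_trans (le_abs_self _) ?_
      rw [← Real.sqrt_sq_eq_abs]
      exact Real.sqrt_le_sqrt h1
    rwa [Real.sqrt_mul (dot_self_nonneg' f)] at h2
  have expand : (f + g) ⬝ᵥ (f + g) = f ⬝ᵥ f + 2 * (f ⬝ᵥ g) + g ⬝ᵥ g := by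
    rw [add_dotProduct, dotProduct_add, dotProduct_add,
      dotProduct_comm g f]
    ring
  rw [expand]
  have h3 : f ⬝ᵥ f + 2 * (f ⬝ᵥ g) + g ⬝ᵥ g ≤
      (Real.sqrt (f ⬝ᵥ f) + Real.sqrt (g ⬝ᵥ g)) ^ 2 := by
    have e1 := Real.sq_sqrt (dot_self_nonneg' f)
    have e2 := Real.sq_sqrt (dot_self_nonneg' g)
    nlinarith
  calc Real.sqrt (f ⬝ᵥ f + 2 * (f ⬝ᵥ g) + g ⬝ᵥ g)
      ≤ Real.sqrt ((Real.sqrt (f ⬝ᵥ f) + Real.sqrt (g ⬝ᵥ g)) ^ 2) := Real.sqrt_le_sqrt h3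
    _ = Real.sqrt (f ⬝ᵥ f) + Real.sqrt (g ⬝ᵥ g) := Real.sqrt_sq (by positivity)

lemma vecMulVec_mulVec' (u w x : ι → ℝ) : (Matrix.vecMulVec u w) *ᵥ x = (w ⬝ᵥ x) • u := by
  funext p
  simp only [Matrix.mulVec, Matrix.vecMulVec_apply, dotProduct, Pi.smul_apply,
    smul_eq_mul, Finset.sum_mul]
  exact Finset.sum_congr rfl fun q _ => by ring

lemma euclid_norm_eq' {κ : Type*} [Fintype κ] (y : EuclideanSpace ℝ κ) :
    ‖y‖ = Real.sqrt ((fun i => y i) ⬝ᵥ (fun i => y i)) := by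
  rw [EuclideanSpace.norm_eq]
  congr 1
  simp [dotProduct, Real.norm_eq_abs, sq, abs_mul_abs_self]

lemma specNorm_le_bound' {m n : Type*} [Fintype m] [Fintype n] [DecidableEq n]
    (M : Matrix m n ℝ) {C : ℝ} (hC : 0 ≤ C)
    (h : ∀ x : n → ℝ, Real.sqrt ((M *ᵥ x) ⬝ᵥ (M *ᵥ x)) ≤ C * Real.sqrt (x ⬝ᵥ x)) :
    ‖LinearMap.toContinuousLinearMap (Matrix.toEuclideanLin M)‖ ≤ C := by
  refine ContinuousLinearMap.opNorm_le_bound _ hC fun x => ?_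
  have happ : (fun i => (LinearMap.toContinuousLinearMap (Matrix.toEuclideanLin M) x) i)
      = M *ᵥ (fun j => x j) := rfl
  have e1 := euclid_norm_eq' ((LinearMap.toContinuousLinearMap (Matrix.toEuclideanLin M)) x)
  have e2 := euclid_norm_eq' x
  rw [e1, e2, happ]
  exact h _

lemma sum_smul_dot' (v : Fin k → ι → ℝ) (y : Fin k → ℝ) (x : ι → ℝ) :
    (∑ i, y i • v i) ⬝ᵥ x = ∑ i, y i * (v i ⬝ᵥ x) := by
  simp only [dotProduct, Finset.sum_apply, Pi.smul_apply, smul_eq_mul, Finset.sum_mul,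
    Finset.mul_sum]
  rw [Finset.sum_comm]
  exact Finset.sum_congr rfl fun i _ => Finset.sum_congr rfl fun p _ => by ring

lemma sum_mulVec' {κ : Type*} [Fintype κ] {m n : Type*} [Fintype m] [Fintype n]
    (M : κ → Matrix m n ℝ) (x : n → ℝ) : (∑ i, M i) *ᵥ x = ∑ i, (M i) *ᵥ x := by
  funext p
  simp only [Matrix.mulVec, dotProduct, Finset.sum_apply, Matrix.sum_apply,
    Finset.sum_mul]
  rw [Finset.sum_comm]

end Helpers

noncomputable def specNorm {m n : Type*} [Fintype m] [Fintype n] [DecidableEq n]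
    (M : Matrix m n ℝ) : ℝ :=
  ‖LinearMap.toContinuousLinearMap (Matrix.toEuclideanLin M)‖

noncomputable def frobNorm {m n : Type*} [Fintype m] [Fintype n]
    (M : Matrix m n ℝ) : ℝ :=
  Real.sqrt (∑ i, ∑ j, (M i j) ^ 2)

set_option maxHeartbeats 1000000

/-- If two orthonormal families are pairwise `ε`-close, then the difference of the sums
of their fourth tensor powers, as a `d²×d²` matrix, has spectral norm at most `4√ε`. -/
theorem fourth_power_sum_close {d k : ℕ} (ε : ℝ) (a b : Fin k → Fin d → ℝ)
    (ha : ∀ i j, a i ⬝ᵥ a j = if i = j then (1 : ℝ) else 0)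
    (hb : ∀ i j, b i ⬝ᵥ b j = if i = j then (1 : ℝ) else 0)
    (hab : ∀ i, 1 - ε ≤ (a i ⬝ᵥ b i) ^ 2) :
    specNorm (∑ i,
        (Matrix.vecMulVec (fun p : Fin d × Fin d => a i p.1 * a i p.2)
            (fun p : Fin d × Fin d => a i p.1 * a i p.2) -
          Matrix.vecMulVec (fun p : Fin d × Fin d => b i p.1 * b i p.2)
            (fun p : Fin d × Fin d => b i p.1 * b i p.2))) ≤ 4 * Real.sqrt ε := by
  classical
  rcases Nat.eq_zero_or_pos k with hk | hk
  · subst hk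
    have hzero : (∑ i : Fin 0,
        (Matrix.vecMulVec (fun p : Fin d × Fin d => a i p.1 * a i p.2)
            (fun p : Fin d × Fin d => a i p.1 * a i p.2) -
          Matrix.vecMulVec (fun p : Fin d × Fin d => b i p.1 * b i p.2)
            (fun p : Fin d × Fin d => b i p.1 * b i p.2))) = 0 := by simp
    rw [hzero]
    have h0 : specNorm (0 : Matrix (Fin d × Fin d) (Fin d × Fin d) ℝ) = 0 := by
      unfold specNorm
      rw [map_zero, map_zero, norm_zero]
    rw [h0]
    positivity
  -- main case : k > 0
  have hε : 0 ≤ ε := by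
    have h1 := hab ⟨0, hk⟩
    have h2 : (a ⟨0, hk⟩ ⬝ᵥ b ⟨0, hk⟩) ^ 2 ≤ 1 := by
      have h3 := dot_sq_le' (a ⟨0, hk⟩) (b ⟨0, hk⟩)
      rw [ha, hb] at h3
      simpa using h3
    linarith
  set A : Fin k → (Fin d × Fin d) → ℝ := fun i p => a i p.1 * a i p.2 with hAdef
  set B : Fin k → (Fin d × Fin d) → ℝ := fun i p => b i p.1 * b i p.2 with hBdef
  have hAA : ∀ i j, A i ⬝ᵥ A j = (a i ⬝ᵥ a j) ^ 2 := fun i j => by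
    rw [hAdef]; rw [prod_dot']; ring
  have hAB : ∀ i j, A i ⬝ᵥ B j = (a i ⬝ᵥ b j) ^ 2 := fun i j => by
    rw [hAdef, hBdef]; rw [prod_dot']; ring
  have hBA : ∀ i j, B i ⬝ᵥ A j = (b i ⬝ᵥ a j) ^ 2 := fun i j => by
    rw [hAdef, hBdef]; rw [prod_dot']; ring
  have hBB : ∀ i j, B i ⬝ᵥ B j = (b i ⬝ᵥ b j) ^ 2 := fun i j => by
    rw [hBdef]; rw [prod_dot']; ring
  have hAorth : ∀ i j, A i ⬝ᵥ A j = if i = j then (1:ℝ) else 0 := by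
    intro i j; rw [hAA, ha]; split <;> norm_num
  have hBorth : ∀ i j, B i ⬝ᵥ B j = if i = j then (1:ℝ) else 0 := by
    intro i j; rw [hBB, hb]; split <;> norm_num
  set v : Fin k → (Fin d × Fin d) → ℝ := fun i => A i - B i with hvdef
  have hvv : ∀ i j, v i ⬝ᵥ v j =
      (a i ⬝ᵥ a j) ^ 2 - (a i ⬝ᵥ b j) ^ 2 - (b i ⬝ᵥ a j) ^ 2 + (b i ⬝ᵥ b j) ^ 2 := by
    intro i j
    rw [hvdef]
    simp only [sub_dotProduct, dotProduct_sub, hAA, hAB, hBA, hBB]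
    ring
  have sqle1 : ∀ i j, (a i ⬝ᵥ b j) ^ 2 ≤ 1 := by
    intro i j
    have h3 := dot_sq_le' (a i) (b j)
    rw [ha, hb] at h3
    simpa using h3
  -- Bessel bounds
  have besselb : ∀ i, ∑ j, (a i ⬝ᵥ b j) ^ 2 ≤ 1 := by
    intro i
    calc ∑ j, (a i ⬝ᵥ b j) ^ 2 = ∑ j, (b j ⬝ᵥ a i) ^ 2 := by
          exact Finset.sum_congr rfl fun j _ => by rw [dotProduct_comm]
      _ ≤ a i ⬝ᵥ a i := bessel' b hb (a i)
      _ = 1 := by rw [ha]; simp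
  have bessela : ∀ i, ∑ j, (a j ⬝ᵥ b i) ^ 2 ≤ 1 := by
    intro i
    calc ∑ j, (a j ⬝ᵥ b i) ^ 2 ≤ b i ⬝ᵥ b i := bessel' a ha (b i)
      _ = 1 := by rw [hb]; simp
  -- row sums of the Gram matrix of v
  have hrow : ∀ i, ∑ j, |v i ⬝ᵥ v j| ≤ 4 * ε := by
    intro i
    set t : Fin k → ℝ := fun j =>
      if j = i then 2 - 2 * (a i ⬝ᵥ b i) ^ 2 else (a i ⬝ᵥ b j) ^ 2 + (a j ⬝ᵥ b i) ^ 2 with htdef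
    have habs : ∀ j, |v i ⬝ᵥ v j| = t j := by
      intro j
      by_cases hij : j = i
      · subst hij
        have hval : v j ⬝ᵥ v j = 2 - 2 * (a j ⬝ᵥ b j) ^ 2 := by
          rw [hvv j j, ha, hb, if_pos rfl, dotProduct_comm (b j) (a j)]
          ring
        have htj : t j = 2 - 2 * (a j ⬝ᵥ b j) ^ 2 := by
          simp only [htdef, if_pos rfl]
        rw [hval, htj, abs_of_nonneg (by nlinarith [sqle1 j j])]
      · have hij' : i ≠ j := fun h => hij h.symm
        have hval : v i ⬝ᵥ v j = -((a i ⬝ᵥ b j) ^ 2 + (a j ⬝ᵥ b i) ^ 2) := by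
          rw [hvv i j, ha, hb, if_neg hij', dotProduct_comm (b i) (a j)]
          ring
        have htj : t j = (a i ⬝ᵥ b j) ^ 2 + (a j ⬝ᵥ b i) ^ 2 := by
          simp only [htdef, if_neg hij]
        rw [hval, htj, abs_neg, abs_of_nonneg (by positivity)]
    have hsum : ∑ j, |v i ⬝ᵥ v j| = ∑ j, t j := Finset.sum_congr rfl fun j _ => habs j
    rw [hsum]
    have hsplit : t i + ∑ j ∈ Finset.univ.erase i, t j = ∑ j, t j :=
      Finset.add_sum_erase Finset.univ t (Finset.mem_univ i)
    have herase : ∑ j ∈ Finset.univ.erase i, t j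
        = ∑ j ∈ Finset.univ.erase i, ((a i ⬝ᵥ b j) ^ 2 + (a j ⬝ᵥ b i) ^ 2) := by
      refine Finset.sum_congr rfl fun j hj => ?_
      rw [htdef]
      exact if_neg (Finset.ne_of_mem_erase hj)
    have e1 : (a i ⬝ᵥ b i) ^ 2 + ∑ j ∈ Finset.univ.erase i, (a i ⬝ᵥ b j) ^ 2
        = ∑ j, (a i ⬝ᵥ b j) ^ 2 :=
      Finset.add_sum_erase Finset.univ (fun j => (a i ⬝ᵥ b j) ^ 2) (Finset.mem_univ i)
    have e2 : (a i ⬝ᵥ b i) ^ 2 + ∑ j ∈ Finset.univ.erase i, (a j ⬝ᵥ b i) ^ 2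
        = ∑ j, (a j ⬝ᵥ b i) ^ 2 :=
      Finset.add_sum_erase Finset.univ (fun j => (a j ⬝ᵥ b i) ^ 2) (Finset.mem_univ i)
    have hti : t i = 2 - 2 * (a i ⬝ᵥ b i) ^ 2 := by rw [htdef]; simp
    have hsum_erase : ∑ j ∈ Finset.univ.erase i, ((a i ⬝ᵥ b j) ^ 2 + (a j ⬝ᵥ b i) ^ 2)
        = (∑ j ∈ Finset.univ.erase i, (a i ⬝ᵥ b j) ^ 2)
          + ∑ j ∈ Finset.univ.erase i, (a j ⬝ᵥ b i) ^ 2 := Finset.sum_add_distrib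
    have hb1 := besselb i
    have hb2 := bessela i
    have hab1 := hab i
    linarith [hsplit, herase, e1, e2, hsum_erase]
  -- the norm bound
  refine specNorm_le_bound' _ (by positivity) fun x => ?_
  set N : ℝ := x ⬝ᵥ x with hNdef
  have hN : 0 ≤ N := dot_self_nonneg' x
  set c : Fin k → ℝ := fun i => A i ⬝ᵥ x with hcdef
  set e : Fin k → ℝ := fun i => B i ⬝ᵥ x with hedef
  have hvx : ∀ i, v i ⬝ᵥ x = c i - e i := by
    intro i; rw [hvdef, hcdef, hedef]; exact sub_dotProduct _ _ _
  set f : (Fin d × Fin d) → ℝ := ∑ i, ((c i + e i) / 2) • v i with hfdef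
  set g1 : (Fin d × Fin d) → ℝ := ∑ i, ((c i - e i) / 2) • A i with hg1def
  set g2 : (Fin d × Fin d) → ℝ := ∑ i, ((c i - e i) / 2) • B i with hg2def
  have hMx : (∑ i,
        (Matrix.vecMulVec (A i) (A i) - Matrix.vecMulVec (B i) (B i))) *ᵥ x
      = f + (g1 + g2) := by
    rw [sum_mulVec']
    have step : ∀ i : Fin k,
        (Matrix.vecMulVec (A i) (A i) - Matrix.vecMulVec (B i) (B i)) *ᵥ x
          = c i • A i - e i • B i := by
      intro i
      rw [Matrix.sub_mulVec, vecMulVec_mulVec', vecMulVec_mulVec', hcdef, hedef]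
    rw [Finset.sum_congr rfl fun i _ => step i]
    rw [hfdef, hg1def, hg2def, ← Finset.sum_add_distrib, ← Finset.sum_add_distrib]
    refine Finset.sum_congr rfl fun i _ => ?_
    rw [hvdef]
    funext p
    simp only [Pi.add_apply, Pi.sub_apply, Pi.smul_apply, smul_eq_mul]
    ring
  -- bound on f
  have hcsq : ∑ i, c i ^ 2 ≤ N := bessel' A hAorth x
  have hesq : ∑ i, e i ^ 2 ≤ N := bessel' B hBorth x
  have hfbound : f ⬝ᵥ f ≤ 4 * ε * N := by
    have h1 : f ⬝ᵥ f ≤ 4 * ε * ∑ i, ((c i + e i) / 2) ^ 2 := by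
      rw [hfdef]; exact schur' v hrow _
    have h2 : ∑ i, ((c i + e i) / 2) ^ 2 ≤ N := by
      have h3 : ∑ i, ((c i + e i) / 2) ^ 2 ≤ ∑ i, (c i ^ 2 / 2 + e i ^ 2 / 2) :=
        Finset.sum_le_sum fun i _ => by nlinarith [sq_nonneg (c i - e i)]
      rw [Finset.sum_add_distrib] at h3
      have h4 : ∑ i, c i ^ 2 / 2 = (∑ i, c i ^ 2) / 2 := by rw [← Finset.sum_div]
      have h5 : ∑ i, e i ^ 2 / 2 = (∑ i, e i ^ 2) / 2 := by rw [← Finset.sum_div]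
      rw [h4, h5] at h3
      linarith
    nlinarith
  -- bound on S = ∑ (v i ⬝ᵥ x)^2
  set S : ℝ := ∑ i, (c i - e i) ^ 2 with hSdef
  have hS0 : 0 ≤ S := Finset.sum_nonneg fun i _ => sq_nonneg _
  have hS : S ≤ 4 * ε * N := by
    set h : (Fin d × Fin d) → ℝ := ∑ i, (c i - e i) • v i with hhdef
    have h1 : S = h ⬝ᵥ x := by
      rw [hhdef, sum_smul_dot', hSdef]
      exact Finset.sum_congr rfl fun i _ => by rw [hvx i]; ring
    have h2 : (h ⬝ᵥ x) ^ 2 ≤ (h ⬝ᵥ h) * N := by rw [hNdef]; exact dot_sq_le' h x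
    have h3 : h ⬝ᵥ h ≤ 4 * ε * S := by
      rw [hhdef, hSdef]; exact schur' v hrow _
    rcases eq_or_lt_of_le hS0 with hS1 | hS1
    · rw [← hS1]; positivity
    · nlinarith
  -- bounds on g1, g2
  have hg1 : g1 ⬝ᵥ g1 = S / 4 := by
    rw [hg1def, synth_orth' A hAorth, hSdef]
    rw [Finset.sum_div]
    exact Finset.sum_congr rfl fun i _ => by ring
  have hg2 : g2 ⬝ᵥ g2 = S / 4 := by
    rw [hg2def, synth_orth' B hBorth, hSdef]
    rw [Finset.sum_div]
    exact Finset.sum_congr rfl fun i _ => by ring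
  -- assemble
  rw [hMx]
  have sqN : Real.sqrt N = Real.sqrt (x ⬝ᵥ x) := by rw [hNdef]
  have tri1 : Real.sqrt ((f + (g1 + g2)) ⬝ᵥ (f + (g1 + g2)))
      ≤ Real.sqrt (f ⬝ᵥ f) + (Real.sqrt (g1 ⬝ᵥ g1) + Real.sqrt (g2 ⬝ᵥ g2)) := by
    refine le_trans (sqrt_dot_triangle' f (g1 + g2)) ?_
    exact add_le_add (le_refl _) (sqrt_dot_triangle' g1 g2)
  have bf : Real.sqrt (f ⬝ᵥ f) ≤ 2 * Real.sqrt ε * Real.sqrt N := by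
    have hsq : f ⬝ᵥ f ≤ (2 * Real.sqrt ε * Real.sqrt N) ^ 2 := by
      have h4 : (2 * Real.sqrt ε * Real.sqrt N) ^ 2 = 4 * ε * N := by
        rw [mul_pow, mul_pow, Real.sq_sqrt hε, Real.sq_sqrt hN]
        ring
      rw [h4]
      exact hfbound
    calc Real.sqrt (f ⬝ᵥ f) ≤ Real.sqrt ((2 * Real.sqrt ε * Real.sqrt N) ^ 2) :=
          Real.sqrt_le_sqrt hsq
      _ = 2 * Real.sqrt ε * Real.sqrt N := Real.sqrt_sq (by positivity)
  have bg : ∀ G : (Fin d × Fin d) → ℝ, G ⬝ᵥ G = S / 4 →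
      Real.sqrt (G ⬝ᵥ G) ≤ Real.sqrt ε * Real.sqrt N := by
    intro G hG
    have hsq : G ⬝ᵥ G ≤ (Real.sqrt ε * Real.sqrt N) ^ 2 := by
      rw [hG]
      have h4 : (Real.sqrt ε * Real.sqrt N) ^ 2 = ε * N := by
        rw [mul_pow, Real.sq_sqrt hε, Real.sq_sqrt hN]
      rw [h4]
      linarith
    calc Real.sqrt (G ⬝ᵥ G) ≤ Real.sqrt ((Real.sqrt ε * Real.sqrt N) ^ 2) :=
          Real.sqrt_le_sqrt hsq
      _ = Real.sqrt ε * Real.sqrt N := Real.sqrt_sq (by positivity)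
  have total := add_le_add bf (add_le_add (bg g1 hg1) (bg g2 hg2))
  rw [← sqN]
  calc Real.sqrt ((f + (g1 + g2)) ⬝ᵥ (f + (g1 + g2)))
      ≤ Real.sqrt (f ⬝ᵥ f) + (Real.sqrt (g1 ⬝ᵥ g1) + Real.sqrt (g2 ⬝ᵥ g2)) := tri1
    _ ≤ 2 * Real.sqrt ε * Real.sqrt N + (Real.sqrt ε * Real.sqrt N + Real.sqrt ε * Real.sqrt N) :=
        total
    _ = 4 * Real.sqrt ε * Real.sqrt N := by ring
end

section
/- Let a₁,…,aₙ ∈ ℝ^d be linearly independent vectors with Gram-type matrix S = Σᵢ aᵢaᵢᵀ satisfying ‖S - Id_V‖ ≤ ε on the span V of the aᵢ, ε < 1. Define ãᵢ = S^{-1/2} aᵢ (pseudo-inverse square root on V). Then ã₁,…,ãₙ are orthonormal, and ⟨ãᵢ, aᵢ⟩² ≥ (1-ε)‖aᵢ‖² for every i. -/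
open Matrix
open scoped Kronecker

section Helpers

variable {d : ℕ}

private theorem vecMulVec_mulVec'_s9 (w u v : Fin d → ℝ) :
    (vecMulVec w u) *ᵥ v = (u ⬝ᵥ v) • w := by
  ext p
  simp only [mulVec, vecMulVec_apply, dotProduct, Pi.smul_apply, smul_eq_mul, Finset.sum_mul]
  exact Finset.sum_congr rfl fun j _ => by ring

private theorem sum_mulVec'_s9 {n : ℕ} (A : Fin n → Matrix (Fin d) (Fin d) ℝ) (v : Fin d → ℝ) :
    (∑ i, A i) *ᵥ v = ∑ i, A i *ᵥ v := by
  ext p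
  simp only [mulVec, dotProduct, Finset.sum_apply, Matrix.sum_apply, Finset.sum_mul]
  rw [Finset.sum_comm]

private theorem symm_dot (M : Matrix (Fin d) (Fin d) ℝ) (h : Mᵀ = M) (x y : Fin d → ℝ) :
    x ⬝ᵥ M *ᵥ y = M *ᵥ x ⬝ᵥ y := by
  rw [dotProduct_mulVec, ← h, vecMul_transpose, h]

private theorem psd_transpose {M : Matrix (Fin d) (Fin d) ℝ} (h : M.PosSemidef) : Mᵀ = M := by
  ext i j
  have h2 := congrFun (congrFun h.1 i) j
  simpa [Matrix.conjTranspose_apply] using h2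

private theorem dot_cs (v w : Fin d → ℝ) : (v ⬝ᵥ w)^2 ≤ (v ⬝ᵥ v) * (w ⬝ᵥ w) := by
  simpa [dotProduct, sq] using Finset.sum_mul_sq_le_sq_mul_sq Finset.univ v w

private theorem dot_self_nonneg'_s9 (v : Fin d → ℝ) : 0 ≤ v ⬝ᵥ v :=
  Finset.sum_nonneg fun i _ => mul_self_nonneg (v i)

private theorem dot_eq_sum_sq (v : Fin d → ℝ) : v ⬝ᵥ v = ∑ p, v p ^ 2 := by
  simp [dotProduct, sq]

private theorem psd_cs {M : Matrix (Fin d) (Fin d) ℝ} (hM : M.PosSemidef) (x y : Fin d → ℝ) :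
    (x ⬝ᵥ M *ᵥ y)^2 ≤ (x ⬝ᵥ M *ᵥ x) * (y ⬝ᵥ M *ᵥ y) := by
  have hsym := psd_transpose hM
  have key : ∀ t : ℝ, 0 ≤ (y ⬝ᵥ M *ᵥ y) * (t*t) + (2*(x ⬝ᵥ M *ᵥ y)) * t + (x ⬝ᵥ M *ᵥ x) := by
    intro t
    have h0 : (0:ℝ) ≤ (x + t • y) ⬝ᵥ M *ᵥ (x + t • y) := by simpa using hM.dotProduct_mulVec_nonneg (x + t • y)
    have e1 : (x + t • y) ⬝ᵥ M *ᵥ (x + t • y)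
        = (x ⬝ᵥ M *ᵥ x) + t * (x ⬝ᵥ M *ᵥ y) + t * (y ⬝ᵥ M *ᵥ x) + t^2 * (y ⬝ᵥ M *ᵥ y) := by
      simp only [Matrix.mulVec_add, Matrix.mulVec_smul, dotProduct_add, add_dotProduct,
        dotProduct_smul, smul_dotProduct, smul_eq_mul]
      ring
    have e2 : y ⬝ᵥ M *ᵥ x = x ⬝ᵥ M *ᵥ y := by
      rw [symm_dot M hsym x y, dotProduct_comm]
    rw [e1, e2] at h0
    nlinarith [h0]
  have hd := discrim_le_zero key
  rw [discrim] at hd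
  nlinarith [hd]

end Helpers

/-- Whitening: if `S = Σ aᵢaᵢᵀ` is `ε`-close to the identity on the span of the `aᵢ`,
then the vectors `ãᵢ = S^{-1/2} aᵢ` are orthonormal and correlate with the `aᵢ`. -/
theorem whitening_orthonormalizes {d n : ℕ} (ε : ℝ) (hε : ε < 1)
    (a : Fin n → Fin d → ℝ) (hli : LinearIndependent ℝ a)
    (S : Matrix (Fin d) (Fin d) ℝ)
    (hSdef : S = ∑ i, Matrix.vecMulVec (a i) (a i))
    (hSnear : ∀ v : Fin d → ℝ, v ∈ Submodule.span ℝ (Set.range a) →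
      Real.sqrt (∑ p, (S.mulVec v p - v p) ^ 2) ≤ ε * Real.sqrt (∑ p, v p ^ 2))
    -- `B` is the inverse square root of `S` on the span of the `aᵢ`:
    (B : Matrix (Fin d) (Fin d) ℝ) (hB : B.PosSemidef)
    (hBV : ∀ v : Fin d → ℝ, v ∈ Submodule.span ℝ (Set.range a) →
      B.mulVec v ∈ Submodule.span ℝ (Set.range a))
    (hBinv : ∀ v : Fin d → ℝ, v ∈ Submodule.span ℝ (Set.range a) →
      (B * B * S).mulVec v = v) :
    (∀ i j, B.mulVec (a i) ⬝ᵥ B.mulVec (a j) = if i = j then (1 : ℝ) else 0) ∧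
      ∀ i, (1 - ε) * (a i ⬝ᵥ a i) ≤ (B.mulVec (a i) ⬝ᵥ a i) ^ 2 := by
  classical
  set V : Submodule ℝ (Fin d → ℝ) := Submodule.span ℝ (Set.range a) with hVdef
  have haV : ∀ i, a i ∈ V := fun i => Submodule.subset_span ⟨i, rfl⟩
  have hBs : Bᵀ = B := psd_transpose hB
  have hSmul : ∀ v, S *ᵥ v = ∑ k, (a k ⬝ᵥ v) • a k := by
    intro v
    rw [hSdef, sum_mulVec'_s9]
    exact Finset.sum_congr rfl fun k _ => vecMulVec_mulVec'_s9 _ _ _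
  have hSV : ∀ v : Fin d → ℝ, S *ᵥ v ∈ V := by
    intro v
    rw [hSmul v]
    exact Submodule.sum_mem _ fun k _ => Submodule.smul_mem _ _ (haV k)
  -- restrictions to V
  set fS : V →ₗ[ℝ] V := LinearMap.restrict (Matrix.mulVecLin S) (fun v _ => hSV v) with hfSdef
  set fB : V →ₗ[ℝ] V := LinearMap.restrict (Matrix.mulVecLin B) (fun v hv => hBV v hv)
    with hfBdef
  have hfS : ∀ v : V, (fS v : Fin d → ℝ) = S *ᵥ (v : Fin d → ℝ) := fun v => rfl
  have hfB : ∀ v : V, (fB v : Fin d → ℝ) = B *ᵥ (v : Fin d → ℝ) := fun v => rfl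
  have hBinv' : ∀ v ∈ V, B *ᵥ (B *ᵥ (S *ᵥ v)) = v := by
    intro v hv
    rw [Matrix.mulVec_mulVec, Matrix.mulVec_mulVec]
    exact hBinv v hv
  have hid' : ∀ v : V, fB (fB (fS v)) = v := by
    intro v
    apply Subtype.ext
    rw [hfB, hfB, hfS]
    exact hBinv' v v.2
  have hSsurj : Function.Surjective fS := by
    have hinj : Function.Injective fS := by
      intro x y h
      have hx : fB (fB (fS x)) = fB (fB (fS y)) := by rw [h]
      rwa [hid' x, hid' y] at hx
    exact (LinearMap.injective_iff_surjective).mp hinj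
  have hSB2 : ∀ v : V, fS (fB (fB v)) = v := by
    intro v
    obtain ⟨w, rfl⟩ := hSsurj v
    rw [hid' w]
  have hg : Function.Injective (fB ∘ₗ fB) := by
    apply (LinearMap.injective_iff_surjective).mpr
    intro v
    exact ⟨fS v, by simp only [LinearMap.comp_apply]; exact hid' v⟩
  have hcomm : ∀ v : V, fB (fS v) = fS (fB v) := by
    intro v
    apply hg
    simp only [LinearMap.comp_apply]
    rw [hid' v, hid' (fB v)]
  -- vector level versions
  have hSB2v : ∀ v ∈ V, S *ᵥ (B *ᵥ (B *ᵥ v)) = v := by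
    intro v hv
    have h := congrArg Subtype.val (hSB2 ⟨v, hv⟩)
    rwa [hfS, hfB, hfB] at h
  have hcommv : ∀ v ∈ V, B *ᵥ (S *ᵥ v) = S *ᵥ (B *ᵥ v) := by
    intro v hv
    have h := congrArg Subtype.val (hcomm ⟨v, hv⟩)
    rwa [hfB, hfS, hfS, hfB] at h
  -- the `B`-symmetric dot product
  have hBdot : ∀ x y : Fin d → ℝ, x ⬝ᵥ B *ᵥ y = B *ᵥ x ⬝ᵥ y := symm_dot B hBs
  -- Part 1
  have hkey : ∀ j k, a k ⬝ᵥ (B *ᵥ (B *ᵥ a j)) = if k = j then 1 else 0 := by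
    intro j k
    have hy : S *ᵥ (B *ᵥ (B *ᵥ a j)) = a j := hSB2v (a j) (haV j)
    have hrep : ∑ l, (a l ⬝ᵥ (B *ᵥ (B *ᵥ a j))) • a l = a j := by rw [← hSmul, hy]
    have h0 : ∑ l, ((a l ⬝ᵥ (B *ᵥ (B *ᵥ a j))) - if l = j then 1 else 0) • a l = 0 := by
      simp only [sub_smul, Finset.sum_sub_distrib, hrep, ite_smul, one_smul, zero_smul]
      simp
    have h := Fintype.linearIndependent_iff.mp hli _ h0 k
    exact sub_eq_zero.mp h
  have part1 : ∀ i j, B *ᵥ (a i) ⬝ᵥ B *ᵥ (a j) = if i = j then (1:ℝ) else 0 := by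
    intro i j
    rw [← hBdot (a i) (B *ᵥ a j)]
    exact hkey j i
  refine ⟨part1, ?_⟩
  -- Part 2
  intro i
  have hε0 : 0 ≤ ε := by
    have hne : a i ≠ 0 := hli.ne_zero i
    have hpos : 0 < ∑ p, (a i p) ^ 2 := by
      rcases Function.ne_iff.mp hne with ⟨p, hp⟩
      exact Finset.sum_pos' (fun q _ => sq_nonneg _)
        ⟨p, Finset.mem_univ p, lt_of_le_of_ne (sq_nonneg _) (Ne.symm (pow_ne_zero 2 hp))⟩
    have h1 := hSnear (a i) (haV i)
    have h2 : (0:ℝ) ≤ Real.sqrt (∑ p, ((S *ᵥ a i) p - a i p) ^ 2) := Real.sqrt_nonneg _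
    have h3 : 0 < Real.sqrt (∑ p, (a i p) ^ 2) := Real.sqrt_pos.mpr hpos
    nlinarith [h1, h2, h3]
  -- the ε-closeness of S to the identity, in bilinear form
  have hnear : ∀ v ∈ V, ∀ w : Fin d → ℝ,
      |w ⬝ᵥ (S *ᵥ v) - w ⬝ᵥ v| ≤ ε * (Real.sqrt (w ⬝ᵥ w) * Real.sqrt (v ⬝ᵥ v)) := by
    intro v hv w
    have hz : w ⬝ᵥ (S *ᵥ v) - w ⬝ᵥ v = w ⬝ᵥ (S *ᵥ v - v) := (dotProduct_sub w _ _).symm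
    rw [hz]
    have h1 : |w ⬝ᵥ (S *ᵥ v - v)|
        ≤ Real.sqrt (w ⬝ᵥ w) * Real.sqrt ((S *ᵥ v - v) ⬝ᵥ (S *ᵥ v - v)) := by
      rw [← Real.sqrt_mul (dot_self_nonneg'_s9 w), ← Real.sqrt_sq_eq_abs]
      exact Real.sqrt_le_sqrt (dot_cs w _)
    have h2 : Real.sqrt ((S *ᵥ v - v) ⬝ᵥ (S *ᵥ v - v)) ≤ ε * Real.sqrt (v ⬝ᵥ v) := by
      rw [dot_eq_sum_sq, dot_eq_sum_sq]
      simpa using hSnear v hv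
    calc |w ⬝ᵥ (S *ᵥ v - v)|
        ≤ Real.sqrt (w ⬝ᵥ w) * Real.sqrt ((S *ᵥ v - v) ⬝ᵥ (S *ᵥ v - v)) := h1
      _ ≤ Real.sqrt (w ⬝ᵥ w) * (ε * Real.sqrt (v ⬝ᵥ v)) :=
          mul_le_mul_of_nonneg_left h2 (Real.sqrt_nonneg _)
      _ = ε * (Real.sqrt (w ⬝ᵥ w) * Real.sqrt (v ⬝ᵥ v)) := by ring
  set α : Fin d → ℝ := a i with hα
  set u : Fin d → ℝ := B *ᵥ α with hu
  set y : Fin d → ℝ := B *ᵥ u with hy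
  have hαV : α ∈ V := haV i
  have huV : u ∈ V := hBV α hαV
  have hyV : y ∈ V := hBV u huV
  set c : ℝ := 1 - ε with hc
  have hc0 : 0 < c := by linarith
  set X : ℝ := u ⬝ᵥ α with hX
  set Y : ℝ := α ⬝ᵥ α with hY
  have hY0 : 0 ≤ Y := dot_self_nonneg'_s9 α
  have huu : u ⬝ᵥ u = 1 := by simpa using part1 i i
  -- α ⬝ y = 1
  have hαy : α ⬝ᵥ y = 1 := by rw [hy, hBdot, ← hu, huu]
  -- y ⬝ S y = 1
  have hySy : y ⬝ᵥ (S *ᵥ y) = 1 := by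
    have h1 : B *ᵥ (B *ᵥ (S *ᵥ y)) = y := hBinv' y hyV
    calc y ⬝ᵥ (S *ᵥ y) = B *ᵥ (B *ᵥ α) ⬝ᵥ (S *ᵥ y) := by rw [← hu, ← hy]
      _ = B *ᵥ α ⬝ᵥ (B *ᵥ (S *ᵥ y)) := by rw [← hBdot]
      _ = α ⬝ᵥ (B *ᵥ (B *ᵥ (S *ᵥ y))) := by rw [← hBdot]
      _ = α ⬝ᵥ y := by rw [h1]
      _ = 1 := hαy
  -- y ⬝ y ≤ 1 / c
  have hyy : y ⬝ᵥ y ≤ 1 / c := by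
    have h1 := hnear y hyV y
    have h2 : Real.sqrt (y ⬝ᵥ y) * Real.sqrt (y ⬝ᵥ y) = y ⬝ᵥ y :=
      Real.mul_self_sqrt (dot_self_nonneg'_s9 y)
    rw [hySy, h2] at h1
    have h3 := abs_le.mp h1
    rw [le_div_iff₀ hc0]
    nlinarith [h3.1]
  -- u ⬝ y ≤ √(1/c)
  have huy0 : 0 ≤ u ⬝ᵥ y := by
    rw [hy]
    simpa using hB.dotProduct_mulVec_nonneg u
  have huy : u ⬝ᵥ y ≤ Real.sqrt (1 / c) := by
    apply Real.le_sqrt_of_sq_le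
    calc (u ⬝ᵥ y) ^ 2 ≤ (u ⬝ᵥ u) * (y ⬝ᵥ y) := dot_cs u y
      _ = y ⬝ᵥ y := by rw [huu, one_mul]
      _ ≤ 1 / c := hyy
  -- sub-step (i) : X ≥ √c
  have hXc : Real.sqrt c ≤ X := by
    have hz : (0:ℝ) ≤ (α - Real.sqrt c • u) ⬝ᵥ B *ᵥ (α - Real.sqrt c • u) := by
      simpa using hB.dotProduct_mulVec_nonneg (α - Real.sqrt c • u)
    have hexp : (α - Real.sqrt c • u) ⬝ᵥ B *ᵥ (α - Real.sqrt c • u)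
        = X - 2 * Real.sqrt c + c * (u ⬝ᵥ y) := by
      have e1 : B *ᵥ (α - Real.sqrt c • u) = u - Real.sqrt c • y := by
        rw [Matrix.mulVec_sub, Matrix.mulVec_smul, ← hu, ← hy]
      rw [e1]
      have hαu : α ⬝ᵥ u = X := dotProduct_comm α u
      have huy' : u ⬝ᵥ y = u ⬝ᵥ y := rfl
      have hsq : Real.sqrt c * Real.sqrt c = c := Real.mul_self_sqrt hc0.le
      simp only [sub_dotProduct, dotProduct_sub, smul_dotProduct, dotProduct_smul, smul_eq_mul]
      rw [hαu, hαy, huu]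
      linear_combination (u ⬝ᵥ y) * hsq
    have hcy : c * (u ⬝ᵥ y) ≤ Real.sqrt c := by
      calc c * (u ⬝ᵥ y) ≤ c * Real.sqrt (1 / c) := by
            exact mul_le_mul_of_nonneg_left huy hc0.le
        _ = Real.sqrt c := by
            rw [one_div, Real.sqrt_inv]
            have hne : Real.sqrt c ≠ 0 := ne_of_gt (Real.sqrt_pos.mpr hc0)
            field_simp
            rw [Real.sq_sqrt hc0.le]
    nlinarith [hz, hexp ▸ hz, hcy]
  have hXpos : 0 < X := lt_of_lt_of_le (Real.sqrt_pos.mpr hc0) hXc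
  have hX2c : c ≤ X ^ 2 := by
    nlinarith [hXc, Real.sq_sqrt hc0.le, Real.sqrt_nonneg c]
  -- the goal is (1-ε) * Y ≤ X ^ 2
  have hgoal : (1 - ε) * Y ≤ X ^ 2 := by
    rcases le_or_gt Y 1 with hY1 | hY1
    · calc (1 - ε) * Y ≤ (1 - ε) * 1 := by
            exact mul_le_mul_of_nonneg_left hY1 hc0.le
        _ = c := by rw [mul_one]
        _ ≤ X ^ 2 := hX2c
    · -- case Y > 1
      have hSy : S *ᵥ y = α := hSB2v α hαV
      have hBSu : B *ᵥ (S *ᵥ u) = α := by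
        rw [hcommv u huV, ← hy, hSy]
      have hf8 : Y ^ 2 ≤ X * ((S *ᵥ u) ⬝ᵥ α) := by
        have hcs := psd_cs hB α (S *ᵥ u)
        rw [hBSu] at hcs
        have e1 : α ⬝ᵥ B *ᵥ α = X := by rw [hBdot, ← hu]
        have e2 : (S *ᵥ u) ⬝ᵥ α = α ⬝ᵥ (S *ᵥ u) := dotProduct_comm _ _
        calc Y ^ 2 = (α ⬝ᵥ α) ^ 2 := by rw [hY]
          _ ≤ (α ⬝ᵥ B *ᵥ α) * ((S *ᵥ u) ⬝ᵥ α) := hcs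
          _ = X * ((S *ᵥ u) ⬝ᵥ α) := by rw [e1]
      have hf9 : (S *ᵥ u) ⬝ᵥ α ≤ X + ε * Real.sqrt Y := by
        have h1 := hnear u huV α
        have h2 : Real.sqrt (u ⬝ᵥ u) = 1 := by rw [huu, Real.sqrt_one]
        rw [h2, mul_one] at h1
        have h3 := (abs_le.mp h1).2
        have e2 : (S *ᵥ u) ⬝ᵥ α = α ⬝ᵥ (S *ᵥ u) := dotProduct_comm _ _
        have e3 : α ⬝ᵥ u = X := dotProduct_comm α u
        rw [e3] at h3
        rw [e2, hY]
        linarith [h3]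
      have hXY : X ≤ Real.sqrt Y := by
        apply Real.le_sqrt_of_sq_le
        calc X ^ 2 ≤ (u ⬝ᵥ u) * (α ⬝ᵥ α) := dot_cs u α
          _ = Y := by rw [huu, one_mul]
      have hsqY : Real.sqrt Y * Real.sqrt Y = Y := Real.mul_self_sqrt hY0
      -- Y^2 ≤ X^2 + ε Y
      have hY2 : Y ^ 2 ≤ X ^ 2 + ε * Y := by
        have hεY : X * (ε * Real.sqrt Y) ≤ ε * Y := by
          calc X * (ε * Real.sqrt Y) = ε * (X * Real.sqrt Y) := by ring
            _ ≤ ε * (Real.sqrt Y * Real.sqrt Y) := by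
                exact mul_le_mul_of_nonneg_left
                  (mul_le_mul_of_nonneg_right hXY (Real.sqrt_nonneg _)) hε0
            _ = ε * Y := by rw [hsqY]
        calc Y ^ 2 ≤ X * ((S *ᵥ u) ⬝ᵥ α) := hf8
          _ ≤ X * (X + ε * Real.sqrt Y) := by
              exact mul_le_mul_of_nonneg_left hf9 hXpos.le
          _ = X ^ 2 + X * (ε * Real.sqrt Y) := by ring
          _ ≤ X ^ 2 + ε * Y := by linarith
      nlinarith [hY2, hY1, hY0]
  simpa [← hX, ← hY, hc] using hgoal
end

section
/- Let M = c·a aᵀ + N where a ∈ ℝⁿ is a unit vector, c > 0, ‖N‖ ≤ c/(1+β) for some β > 0, and ‖Na‖, ‖Nᵀa‖ ≤ εc, with 2ε(1+β)/β < 0.01. Then any top unit singular vector u of M (left or right, whichever achieves it) satisfies ⟨u, a⟩² ≥ 0.99. -/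
open Matrix
open scoped Kronecker

open scoped Matrix.Norms.L2Operator

noncomputable def toE {n : ℕ} (x : Fin n → ℝ) : EuclideanSpace ℝ (Fin n) :=
  (WithLp.equiv 2 (Fin n → ℝ)).symm x

variable {n : ℕ}

lemma specNorm_eq (M : Matrix (Fin n) (Fin n) ℝ) : specNorm M = ‖M‖ := rfl

lemma inner_toE (x y : Fin n → ℝ) : (inner ℝ (toE x) (toE y) : ℝ) = x ⬝ᵥ y := by
  simp [toE, PiLp.inner_apply, dotProduct, WithLp.equiv_symm_apply, PiLp.toLp_apply, mul_comm]

lemma norm_toE_sq (x : Fin n → ℝ) : ‖toE x‖ ^ 2 = x ⬝ᵥ x := by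
  rw [← real_inner_self_eq_norm_sq, inner_toE]

lemma norm_toE (x : Fin n → ℝ) : ‖toE x‖ = Real.sqrt (∑ i, x i ^ 2) := by
  rw [EuclideanSpace.norm_eq]
  congr 1
  simp [toE, WithLp.equiv_symm_apply, PiLp.toLp_apply, sq_abs]

lemma toE_smul (r : ℝ) (x : Fin n → ℝ) : toE (r • x) = r • toE x := rfl
lemma toE_add (x y : Fin n → ℝ) : toE (x + y) = toE x + toE y := rfl
lemma toE_sub (x y : Fin n → ℝ) : toE (x - y) = toE x - toE y := rfl

lemma mulVec_norm_le (M : Matrix (Fin n) (Fin n) ℝ) (x : Fin n → ℝ) :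
    ‖toE (M *ᵥ x)‖ ≤ specNorm M * ‖toE x‖ :=
  M.l2_opNorm_mulVec (toE x)

lemma toE_eq_zero {x : Fin n → ℝ} (h : ‖toE x‖ = 0) : x = 0 :=
  (WithLp.equiv 2 (Fin n → ℝ)).symm.injective (norm_eq_zero.mp h)

lemma specNorm_transpose (M : Matrix (Fin n) (Fin n) ℝ) : specNorm Mᵀ = specNorm M := by
  rw [specNorm_eq, specNorm_eq, ← Matrix.conjTranspose_eq_transpose_of_trivial,
    Matrix.l2_opNorm_conjTranspose]

lemma le_of_sq_le_sq' {A B : ℝ} (hA : 0 ≤ A) (hB : 0 ≤ B) (h : A ^ 2 ≤ B ^ 2) : A ≤ B :=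
  (pow_le_pow_iff_left₀ hA hB two_ne_zero).mp h

lemma vecMulVec_mulVec'_s14 (a b x : Fin n → ℝ) : vecMulVec a b *ᵥ x = (b ⬝ᵥ x) • a := by
  funext i
  simp [vecMulVec_apply, mulVec, dotProduct, Finset.mul_sum, mul_comm, mul_assoc, mul_left_comm]

set_option maxHeartbeats 2000000 in
lemma core {n : ℕ}
    (M N : Matrix (Fin n) (Fin n) ℝ) (a : Fin n → ℝ) (c ε β : ℝ)
    (hc : 0 < c) (hβ : 0 < β) (ha : a ⬝ᵥ a = 1)
    (hM : M = c • Matrix.vecMulVec a a + N)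
    (hN : specNorm N ≤ c / (1 + β))
    (hNa : Real.sqrt (∑ i, (N.mulVec a) i ^ 2) ≤ ε * c)
    (hNta : Real.sqrt (∑ i, (Matrix.vecMul a N) i ^ 2) ≤ ε * c)
    (hsmall : 2 * ε * (1 + β) / β < 0.01)
    (u w : Fin n → ℝ) (hu : u ⬝ᵥ u = 1) (hw : w ⬝ᵥ w = 1)
    (htop : u ⬝ᵥ M.mulVec w = specNorm M) :
    (0.99 : ℝ) ≤ (u ⬝ᵥ a) ^ 2 := by
  have h1β : (0:ℝ) < 1 + β := by linarith
  set σ := specNorm M with hσdef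
  set s := u ⬝ᵥ a with hs
  set t := w ⬝ᵥ a with ht
  have hσ0 : 0 ≤ σ := norm_nonneg _
  have hε : 0 ≤ ε := by
    have h0 := Real.sqrt_nonneg (∑ i, (N.mulVec a) i ^ 2)
    nlinarith
  have hnu : ‖toE u‖ = 1 := by
    rw [norm_toE]
    have : ∑ i, u i ^ 2 = 1 := by simpa [dotProduct, pow_two] using hu
    rw [this, Real.sqrt_one]
  have hnw : ‖toE w‖ = 1 := by
    rw [norm_toE]
    have : ∑ i, w i ^ 2 = 1 := by simpa [dotProduct, pow_two] using hw
    rw [this, Real.sqrt_one]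
  have hna : ‖toE a‖ = 1 := by
    rw [norm_toE]
    have : ∑ i, a i ^ 2 = 1 := by simpa [dotProduct, pow_two] using ha
    rw [this, Real.sqrt_one]
  have hNa' : ‖toE (N *ᵥ a)‖ ≤ ε * c := by rw [norm_toE]; exact hNa
  have hNta' : ‖toE (Nᵀ *ᵥ a)‖ ≤ ε * c := by
    rw [norm_toE, Matrix.mulVec_transpose]; exact hNta
  -- σ ≥ c - εc
  have hMa : M *ᵥ a = c • a + N *ᵥ a := by
    rw [hM, Matrix.add_mulVec, Matrix.smul_mulVec, vecMulVec_mulVec'_s14, ha, one_smul]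
  have habs : |a ⬝ᵥ (N *ᵥ a)| ≤ ε * c := by
    rw [← inner_toE]
    calc |(inner ℝ (toE a) (toE (N *ᵥ a)) : ℝ)| ≤ ‖toE a‖ * ‖toE (N *ᵥ a)‖ :=
          abs_real_inner_le_norm _ _
      _ ≤ ε * c := by rw [hna, one_mul]; exact hNa'
  have hMabs : |a ⬝ᵥ (M *ᵥ a)| ≤ σ := by
    have h2 : ‖toE (M *ᵥ a)‖ ≤ σ := by simpa [hna] using mulVec_norm_le M a
    rw [← inner_toE]
    calc |(inner ℝ (toE a) (toE (M *ᵥ a)) : ℝ)| ≤ ‖toE a‖ * ‖toE (M *ᵥ a)‖ :=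
          abs_real_inner_le_norm _ _
      _ ≤ σ := by rw [hna, one_mul]; exact h2
  have haMa : a ⬝ᵥ (M *ᵥ a) = c + a ⬝ᵥ (N *ᵥ a) := by
    rw [hMa]
    simp [dotProduct_add, dotProduct_smul, ha, smul_eq_mul]
  have hσ1 : c - ε * c ≤ σ := by
    have h1 := abs_le.mp habs
    have h2 := abs_le.mp hMabs
    rw [haMa] at h2
    linarith [h1.1, h2.2]
  -- M *ᵥ w = σ • u
  have hMw : M *ᵥ w = σ • u := by
    have hle : ‖toE (M *ᵥ w)‖ ≤ σ := by simpa [hnw] using mulVec_norm_le M w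
    have hcomm : (M *ᵥ w) ⬝ᵥ u = σ := by rw [dotProduct_comm]; exact htop
    have hdd : (M *ᵥ w - σ • u) ⬝ᵥ (M *ᵥ w - σ • u) ≤ 0 := by
      have hsq : (M *ᵥ w) ⬝ᵥ (M *ᵥ w) = ‖toE (M *ᵥ w)‖ ^ 2 := (norm_toE_sq _).symm
      simp only [sub_dotProduct, dotProduct_sub, smul_dotProduct,
        dotProduct_smul, smul_eq_mul, hcomm, htop, hu, hsq]
      nlinarith [norm_nonneg (toE (M *ᵥ w))]
    have hz : ‖toE (M *ᵥ w - σ • u)‖ ^ 2 ≤ 0 := by rw [norm_toE_sq]; exact hdd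
    have h0 : M *ᵥ w - σ • u = 0 := by
      apply toE_eq_zero
      nlinarith [norm_nonneg (toE (M *ᵥ w - σ • u))]
    exact sub_eq_zero.mp h0
  -- Mᵀ *ᵥ u = σ • w
  have hMtu : Mᵀ *ᵥ u = σ • w := by
    have hle : ‖toE (Mᵀ *ᵥ u)‖ ≤ σ := by
      have := mulVec_norm_le Mᵀ u
      rw [specNorm_transpose, hnu] at this
      simpa using this
    have hcomm : (Mᵀ *ᵥ u) ⬝ᵥ w = σ := by
      rw [Matrix.mulVec_transpose, ← Matrix.dotProduct_mulVec]
      exact htop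
    have hcomm2 : w ⬝ᵥ (Mᵀ *ᵥ u) = σ := by rw [dotProduct_comm]; exact hcomm
    have hdd : (Mᵀ *ᵥ u - σ • w) ⬝ᵥ (Mᵀ *ᵥ u - σ • w) ≤ 0 := by
      have hsq : (Mᵀ *ᵥ u) ⬝ᵥ (Mᵀ *ᵥ u) = ‖toE (Mᵀ *ᵥ u)‖ ^ 2 := (norm_toE_sq _).symm
      simp only [sub_dotProduct, dotProduct_sub, smul_dotProduct,
        dotProduct_smul, smul_eq_mul, hcomm, hcomm2, hw, hsq]
      nlinarith [norm_nonneg (toE (Mᵀ *ᵥ u))]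
    have h0 : Mᵀ *ᵥ u - σ • w = 0 := by
      apply toE_eq_zero
      have hz : ‖toE (Mᵀ *ᵥ u - σ • w)‖ ^ 2 ≤ 0 := by rw [norm_toE_sq]; exact hdd
      nlinarith [norm_nonneg (toE (Mᵀ *ᵥ u - σ • w))]
    exact sub_eq_zero.mp h0
  -- N action
  have hNw : N *ᵥ w = σ • u - (c * t) • a := by
    have : M *ᵥ w = (c * t) • a + N *ᵥ w := by
      rw [hM, Matrix.add_mulVec, Matrix.smul_mulVec, vecMulVec_mulVec'_s14,
        dotProduct_comm a w, ← ht, smul_smul]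
    rw [hMw] at this
    rw [this]
    abel
  have hNtu : Nᵀ *ᵥ u = σ • w - (c * s) • a := by
    have hMt : Mᵀ = c • Matrix.vecMulVec a a + Nᵀ := by
      rw [hM, Matrix.transpose_add, Matrix.transpose_smul]
      congr 1
      funext i j
      simp [vecMulVec_apply, Matrix.transpose_apply, mul_comm]
    have : Mᵀ *ᵥ u = (c * s) • a + Nᵀ *ᵥ u := by
      rw [hMt, Matrix.add_mulVec, Matrix.smul_mulVec, vecMulVec_mulVec'_s14,
        dotProduct_comm a u, ← hs, smul_smul]
    rw [hMtu] at this
    rw [this]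
    abel
  -- x and y
  obtain ⟨x, hxdef⟩ : ∃ r : ℝ, r = ‖toE (u - s • a)‖ := ⟨_, rfl⟩
  obtain ⟨y, hydef⟩ : ∃ r : ℝ, r = ‖toE (w - t • a)‖ := ⟨_, rfl⟩
  have hx0 : 0 ≤ x := hxdef ▸ norm_nonneg _
  have hy0 : 0 ≤ y := hydef ▸ norm_nonneg _
  have hx2 : x ^ 2 = 1 - s ^ 2 := by
    rw [hxdef, norm_toE_sq]

    have hau : a ⬝ᵥ u = s := by rw [dotProduct_comm]
    simp only [sub_dotProduct, dotProduct_sub, smul_dotProduct,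
      dotProduct_smul, smul_eq_mul, hu, ha, hau, ← hs]
    ring
  have hy2 : y ^ 2 = 1 - t ^ 2 := by
    rw [hydef, norm_toE_sq]
    have haw : a ⬝ᵥ w = t := by rw [dotProduct_comm]
    simp only [sub_dotProduct, dotProduct_sub, smul_dotProduct,
      dotProduct_smul, smul_eq_mul, hw, ha, haw, ← ht]
    ring
  have hs1 : |s| ≤ 1 := by
    rw [← sq_le_one_iff_abs_le_one]
    nlinarith [sq_nonneg x]
  have ht1 : |t| ≤ 1 := by
    rw [← sq_le_one_iff_abs_le_one]
    nlinarith [sq_nonneg y]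
  -- key inequality 1 : σ x ≤ εc + (c/(1+β)) y
  have key1 : σ * x ≤ ε * c + (c / (1 + β)) * y := by
    have hupper : ‖toE (N *ᵥ w)‖ ≤ ε * c + (c / (1 + β)) * y := by
      have hsplit : N *ᵥ w = t • (N *ᵥ a) + N *ᵥ (w - t • a) := by
        rw [Matrix.mulVec_sub, Matrix.mulVec_smul]
        abel
      calc ‖toE (N *ᵥ w)‖ = ‖t • toE (N *ᵥ a) + toE (N *ᵥ (w - t • a))‖ := by
            rw [hsplit, toE_add, toE_smul]
        _ ≤ ‖t • toE (N *ᵥ a)‖ + ‖toE (N *ᵥ (w - t • a))‖ := norm_add_le _ _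
        _ ≤ |t| * (ε * c) + specNorm N * y := by
            gcongr
            · rw [norm_smul, Real.norm_eq_abs]
              gcongr
            · rw [hydef]; exact mulVec_norm_le N _
        _ ≤ ε * c + (c / (1 + β)) * y := by
            have h1 : |t| * (ε * c) ≤ 1 * (ε * c) := by
              apply mul_le_mul_of_nonneg_right ht1 (by positivity)
            have h2 : specNorm N * y ≤ (c / (1 + β)) * y :=
              mul_le_mul_of_nonneg_right hN hy0
            linarith
    have hlower : σ * x ≤ ‖toE (N *ᵥ w)‖ := by
      apply le_of_sq_le_sq' (by positivity) (norm_nonneg _)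
      rw [hNw, norm_toE_sq, mul_pow, hx2]
      have hau : a ⬝ᵥ u = s := by rw [dotProduct_comm]
      simp only [sub_dotProduct, dotProduct_sub, smul_dotProduct,
        dotProduct_smul, smul_eq_mul, hu, ha, hau, ← hs]
      nlinarith [sq_nonneg (σ * s - c * t)]
    linarith
  -- key inequality 2 : σ y ≤ εc + (c/(1+β)) x
  have key2 : σ * y ≤ ε * c + (c / (1 + β)) * x := by
    have hNt : specNorm Nᵀ ≤ c / (1 + β) := by rw [specNorm_transpose]; exact hN
    have hupper : ‖toE (Nᵀ *ᵥ u)‖ ≤ ε * c + (c / (1 + β)) * x := by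
      have hsplit : Nᵀ *ᵥ u = s • (Nᵀ *ᵥ a) + Nᵀ *ᵥ (u - s • a) := by
        rw [Matrix.mulVec_sub, Matrix.mulVec_smul]
        abel
      calc ‖toE (Nᵀ *ᵥ u)‖ = ‖s • toE (Nᵀ *ᵥ a) + toE (Nᵀ *ᵥ (u - s • a))‖ := by
            rw [hsplit, toE_add, toE_smul]
        _ ≤ ‖s • toE (Nᵀ *ᵥ a)‖ + ‖toE (Nᵀ *ᵥ (u - s • a))‖ := norm_add_le _ _
        _ ≤ |s| * (ε * c) + specNorm Nᵀ * x := by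
            gcongr
            · rw [norm_smul, Real.norm_eq_abs]
              gcongr
            · rw [hxdef]; exact mulVec_norm_le Nᵀ _
        _ ≤ ε * c + (c / (1 + β)) * x := by
            have h1 : |s| * (ε * c) ≤ 1 * (ε * c) := by
              apply mul_le_mul_of_nonneg_right hs1 (by positivity)
            have h2 : specNorm Nᵀ * x ≤ (c / (1 + β)) * x :=
              mul_le_mul_of_nonneg_right hNt hx0
            linarith
    have hlower : σ * y ≤ ‖toE (Nᵀ *ᵥ u)‖ := by
      apply le_of_sq_le_sq' (by positivity) (norm_nonneg _)
      rw [hNtu, norm_toE_sq, mul_pow, hy2]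
      have haw : a ⬝ᵥ w = t := by rw [dotProduct_comm]
      simp only [sub_dotProduct, dotProduct_sub, smul_dotProduct,
        dotProduct_smul, smul_eq_mul, hw, ha, haw, ← ht]
      nlinarith [sq_nonneg (σ * t - c * s)]
    linarith
  -- numerics
  have hεβ : ε * (1 + β) < 0.005 * β := by
    rw [div_lt_iff₀ hβ] at hsmall
    nlinarith
  have hεc : ε * (1 + β) * c < 0.005 * β * c := by nlinarith
  have hgap : 0.995 * (c * β / (1 + β)) ≤ σ - c / (1 + β) := by
    rw [le_sub_iff_add_le]
    have h2 : 0.995 * (c * β / (1 + β)) + c / (1 + β) = (0.995 * (c * β) + c) / (1 + β) := by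
      ring
    rw [h2, div_le_iff₀ h1β]
    nlinarith [mul_le_mul_of_nonneg_right hσ1 h1β.le]
  have hgpos : 0 < σ - c / (1 + β) := by
    have : (0:ℝ) < 0.995 * (c * β / (1 + β)) := by positivity
    linarith
  have hgx : (σ - c / (1 + β)) * x ≤ 2 * (ε * c) := by
    nlinarith [key1, key2, mul_nonneg hgpos.le hy0]
  have h2εc : 2 * (ε * c) ≤ 0.1 * (σ - c / (1 + β)) := by
    have h3 : 2 * (ε * c) ≤ 0.0995 * (c * β / (1 + β)) := by
      rw [show (0.0995:ℝ) * (c * β / (1 + β)) = 0.0995 * (c * β) / (1 + β) from by ring,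
        le_div_iff₀ h1β]
      nlinarith
    linarith [hgap]
  have hx01 : x ≤ 0.1 := by
    have h4 : (σ - c / (1 + β)) * x ≤ (σ - c / (1 + β)) * 0.1 := by linarith
    exact (mul_le_mul_iff_right₀ hgpos).mp h4
  nlinarith [hx2, hx01, hx0]

/-- If `M = c aaᵀ + N` with `‖N‖ ≤ c/(1+β)` and `‖Na‖, ‖Nᵀa‖ ≤ εc`, with
`2ε(1+β)/β < 0.01`, then a top singular vector of `M` is `0.99`-correlated with `a`. -/
theorem top_singular_vector_correlates {n : ℕ}
    (M N : Matrix (Fin n) (Fin n) ℝ) (a : Fin n → ℝ) (c ε β : ℝ)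
    (hc : 0 < c) (hβ : 0 < β) (ha : a ⬝ᵥ a = 1)
    (hM : M = c • Matrix.vecMulVec a a + N)
    (hN : specNorm N ≤ c / (1 + β))
    (hNa : Real.sqrt (∑ i, (N.mulVec a) i ^ 2) ≤ ε * c)
    (hNta : Real.sqrt (∑ i, (Matrix.vecMul a N) i ^ 2) ≤ ε * c)
    (hsmall : 2 * ε * (1 + β) / β < 0.01)
    (u w : Fin n → ℝ) (hu : u ⬝ᵥ u = 1) (hw : w ⬝ᵥ w = 1)
    (htop : |u ⬝ᵥ M.mulVec w| = specNorm M) :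
    (0.99 : ℝ) ≤ (u ⬝ᵥ a) ^ 2 ∨ (0.99 : ℝ) ≤ (w ⬝ᵥ a) ^ 2 := by
  left
  have hσ0 : (0:ℝ) ≤ specNorm M := norm_nonneg _
  rcases (abs_eq hσ0).mp htop with h | h
  · exact core M N a c ε β hc hβ ha hM hN hNa hNta hsmall u w hu hw h
  · have hu' : (-u) ⬝ᵥ (-u) = 1 := by
      rw [neg_dotProduct, dotProduct_neg, neg_neg]; exact hu
    have h' : (-u) ⬝ᵥ M.mulVec w = specNorm M := by
      rw [neg_dotProduct, h, neg_neg]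
    have := core M N a c ε β hc hβ ha hM hN hNa hNta hsmall (-u) w hu' hw h'
    rwa [neg_dotProduct, neg_sq] at this
end
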